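/- For submodular f and any j with 1 ≤ j ≤ n and δ ∈ [0,1]: ∫_0^δ ( f(A_j(ℓ_j,θ)) − f(A_{j−1}(ℓ_j,θ)) ) dθ ≥ ∫_0^{min(α_j,δ)} ( f(A_{j−1}(θ) + v_j) − f(A_{j−1}(θ)) ) dθ. -/

import Mathlib

open MeasureTheory Set

lemma meas_f_comp {n : ℕ} (f : Set (Fin n) → ℝ) (g : ℝ → Set (Fin n))
    (hg : ∀ v, MeasurableSet {θ | v ∈ g θ}) :
    Measurable (fun θ => f (g θ)) := by
  have hfib : ∀ A : Set (Fin n), MeasurableSet {θ | g θ = A} := by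
    intro A
    have h : {θ | g θ = A} = ⋂ v, {θ | v ∈ g θ ↔ v ∈ A} := by
      ext θ; simp [Set.ext_iff]
    rw [h]
    refine MeasurableSet.iInter fun v => ?_
    by_cases hv : v ∈ A
    · simp only [hv, iff_true]; exact hg v
    · simp only [hv, iff_false]; exact (hg v).compl
  intro t ht
  have h : (fun θ => f (g θ)) ⁻¹' t = ⋃ (A : Set (Fin n)), {θ | g θ = A} ∩ {θ | f A ∈ t} := by
    ext θ; simp
  rw [h]
  exact MeasurableSet.iUnion fun A => (hfib A).inter (by by_cases h : f A ∈ t <;> simp [h])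

lemma intint_f_comp {n : ℕ} (f : Set (Fin n) → ℝ) (g : ℝ → Set (Fin n))
    (hg : ∀ v, MeasurableSet {θ | v ∈ g θ}) (a b : ℝ) :
    IntervalIntegrable (fun θ => f (g θ)) volume a b := by
  obtain ⟨A₀, hA₀⟩ := Finite.exists_max (fun A : Set (Fin n) => |f A|)
  rw [intervalIntegrable_iff]
  refine Integrable.mono' (g := fun _ => |f A₀|) ?_ ?_ ?_
  · exact integrableOn_const (by rw [Set.uIoc]; exact measure_Ioc_lt_top.ne)
  · exact (meas_f_comp f g hg).aestronglyMeasurable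
  · exact Filter.Eventually.of_forall fun θ => hA₀ (g θ)


/-- Proposition: for submodular `f`, `1 ≤ j ≤ n` and `δ ∈ [0,1]`,
`∫_0^δ (f(A_j(ℓ_j,θ)) − f(A_{j−1}(ℓ_j,θ))) dθ
  ≥ ∫_0^{min(α_j,δ)} (f(A_{j−1}(θ) + v_j) − f(A_{j−1}(θ))) dθ`.
Vertices are `0`-indexed: the paper's `v_j` is `⟨j-1, _⟩ : Fin n`,
`A_j(i,θ) = {v ∈ V_j | x(v,i) ≥ θ}`, `A_{j-1}(θ) = {v ∈ V_{j-1} | ∃ i, x(v,i) ≥ θ}`,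
`V_j = {v | v.val < j}`, and `ℓ` attains `α_j = max_i x(v_j, i)`. -/
theorem charging_lemma_two_pointwise {n k : ℕ} (f : Set (Fin n) → ℝ)
    (hsub : ∀ A B : Set (Fin n), f A + f B ≥ f (A ∩ B) + f (A ∪ B))
    (x : Fin n → Fin k → ℝ)
    (hx0 : ∀ v i, 0 ≤ x v i) (hxsum : ∀ v, ∑ i, x v i = 1)
    (δ : ℝ) (hδ : δ ∈ Set.Icc (0:ℝ) 1)
    (j : ℕ) (hj1 : 1 ≤ j) (hjn : j ≤ n)
    (ℓ : Fin k) (hℓ : ∀ i : Fin k, x ⟨j - 1, by omega⟩ i ≤ x ⟨j - 1, by omega⟩ ℓ) :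
    (∫ θ in (0:ℝ)..δ,
        (f {v : Fin n | v.val < j ∧ θ ≤ x v ℓ}
          - f {v : Fin n | v.val < j - 1 ∧ θ ≤ x v ℓ})) ≥
      ∫ θ in (0:ℝ)..(min (x ⟨j - 1, by omega⟩ ℓ) δ),
        (f ({v : Fin n | v.val < j - 1 ∧ ∃ i : Fin k, θ ≤ x v i} ∪ {⟨j - 1, by omega⟩})
          - f {v : Fin n | v.val < j - 1 ∧ ∃ i : Fin k, θ ≤ x v i}) := by
  set vj : Fin n := ⟨j - 1, by omega⟩ with hvj
  set g1 : ℝ → Set (Fin n) := fun θ => {v : Fin n | v.val < j ∧ θ ≤ x v ℓ} with hg1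
  set g2 : ℝ → Set (Fin n) := fun θ => {v : Fin n | v.val < j - 1 ∧ θ ≤ x v ℓ} with hg2
  set g3 : ℝ → Set (Fin n) := fun θ => {v : Fin n | v.val < j - 1 ∧ ∃ i : Fin k, θ ≤ x v i}
    with hg3
  set g4 : ℝ → Set (Fin n) := fun θ => g3 θ ∪ {vj} with hg4
  have hm1 : ∀ v, MeasurableSet {θ : ℝ | v ∈ g1 θ} := by
    intro v
    by_cases h : v.val < j
    · have : {θ : ℝ | v ∈ g1 θ} = Set.Iic (x v ℓ) := by ext θ; simp [hg1, h]
      rw [this]; exact measurableSet_Iic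
    · have : {θ : ℝ | v ∈ g1 θ} = ∅ := by ext θ; simp [hg1, h]
      rw [this]; exact MeasurableSet.empty
  have hm2 : ∀ v, MeasurableSet {θ : ℝ | v ∈ g2 θ} := by
    intro v
    by_cases h : v.val < j - 1
    · have : {θ : ℝ | v ∈ g2 θ} = Set.Iic (x v ℓ) := by ext θ; simp [hg2, h]
      rw [this]; exact measurableSet_Iic
    · have : {θ : ℝ | v ∈ g2 θ} = ∅ := by ext θ; simp [hg2, h]
      rw [this]; exact MeasurableSet.empty
  have hm3 : ∀ v, MeasurableSet {θ : ℝ | v ∈ g3 θ} := by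
    intro v
    by_cases h : v.val < j - 1
    · have : {θ : ℝ | v ∈ g3 θ} = ⋃ i : Fin k, Set.Iic (x v i) := by
        ext θ; simp [hg3, h]
      rw [this]; exact MeasurableSet.iUnion fun i => measurableSet_Iic
    · have : {θ : ℝ | v ∈ g3 θ} = ∅ := by ext θ; simp [hg3, h]
      rw [this]; exact MeasurableSet.empty
  have hm4 : ∀ v, MeasurableSet {θ : ℝ | v ∈ g4 θ} := by
    intro v
    by_cases h : v = vj
    · have : {θ : ℝ | v ∈ g4 θ} = Set.univ := by ext θ; simp [hg4, h]
      rw [this]; exact MeasurableSet.univ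
    · have : {θ : ℝ | v ∈ g4 θ} = {θ : ℝ | v ∈ g3 θ} := by ext θ; simp [hg4, h]
      rw [this]; exact hm3 v
  have hInt : ∀ (g : ℝ → Set (Fin n)), (∀ v, MeasurableSet {θ : ℝ | v ∈ g θ}) →
      ∀ a b : ℝ, IntervalIntegrable (fun θ => f (g θ)) volume a b :=
    fun g hg a b => intint_f_comp f g hg a b
  set α : ℝ := x vj ℓ with hα
  have hα0 : 0 ≤ α := hx0 _ _
  set m : ℝ := min α δ with hmdef
  have hm0 : 0 ≤ m := le_min hα0 hδ.1
  have hmδ : m ≤ δ := min_le_right _ _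
  have hmα : m ≤ α := min_le_left _ _
  -- pointwise inequality on [0, m]
  have key : ∀ θ ∈ Set.Icc (0:ℝ) m,
      f (g4 θ) - f (g3 θ) ≤ f (g1 θ) - f (g2 θ) := by
    intro θ hθ
    have hθα : θ ≤ α := hθ.2.trans hmα
    have h1 : g1 θ = g2 θ ∪ {vj} := by
      ext v
      simp only [hg1, hg2, Set.mem_setOf_eq, Set.mem_union, Set.mem_singleton_iff]
      constructor
      · rintro ⟨hvlt, hvx⟩
        by_cases hv : v.val < j - 1
        · exact Or.inl ⟨hv, hvx⟩
        · right; apply Fin.ext; simp [hvj]; omega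
      · rintro (⟨hvlt, hvx⟩ | rfl)
        · exact ⟨by omega, hvx⟩
        · exact ⟨by simp [hvj]; omega, hθα⟩
    have h23 : g2 θ ⊆ g3 θ := by
      intro v hv
      exact ⟨hv.1, ⟨ℓ, hv.2⟩⟩
    have hvj3 : vj ∉ g3 θ := by
      intro hcon
      simpa [hvj] using hcon.1
    have hsubm := hsub (g2 θ ∪ {vj}) (g3 θ)
    have hI : (g2 θ ∪ {vj}) ∩ g3 θ = g2 θ := by
      ext v
      simp only [Set.mem_inter_iff, Set.mem_union, Set.mem_singleton_iff]
      constructor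
      · rintro ⟨(h | rfl), h3⟩
        · exact h
        · exact absurd h3 hvj3
      · intro h; exact ⟨Or.inl h, h23 h⟩
    have hU : (g2 θ ∪ {vj}) ∪ g3 θ = g4 θ := by
      rw [hg4]
      ext v
      simp only [Set.mem_union, Set.mem_singleton_iff]
      tauto
    rw [hI, hU] at hsubm
    rw [h1]
    linarith
  -- split and bound
  have hsplit : (∫ θ in (0:ℝ)..δ, (f (g1 θ) - f (g2 θ)))
      = (∫ θ in (0:ℝ)..m, (f (g1 θ) - f (g2 θ)))
        + ∫ θ in m..δ, (f (g1 θ) - f (g2 θ)) := by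
    rw [intervalIntegral.integral_add_adjacent_intervals
      ((hInt g1 hm1 0 m).sub (hInt g2 hm2 0 m))
      ((hInt g1 hm1 m δ).sub (hInt g2 hm2 m δ))]
  have hzero : (∫ θ in m..δ, (f (g1 θ) - f (g2 θ))) = 0 := by
    rw [intervalIntegral.integral_of_le hmδ]
    apply MeasureTheory.setIntegral_eq_zero_of_forall_eq_zero
    intro θ hθ
    have hθα : α < θ := by
      rcases le_or_gt δ α with h | h
      · have hmeq : m = δ := min_eq_right h
        rw [hmeq] at hθ
        exact absurd hθ.2 (not_le.2 hθ.1)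
      · have hmeq : m = α := min_eq_left h.le
        rw [hmeq] at hθ
        exact hθ.1
    have h12 : g1 θ = g2 θ := by
      ext v
      simp only [hg1, hg2, Set.mem_setOf_eq]
      constructor
      · rintro ⟨hvlt, hvx⟩
        refine ⟨?_, hvx⟩
        by_contra hv
        have hveq : v = vj := by apply Fin.ext; simp [hvj]; omega
        rw [hveq] at hvx
        exact absurd hvx (not_le.2 hθα)
      · rintro ⟨hvlt, hvx⟩; exact ⟨by omega, hvx⟩
    rw [h12]; ring
  have hmono : (∫ θ in (0:ℝ)..m, (f (g4 θ) - f (g3 θ)))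
      ≤ ∫ θ in (0:ℝ)..m, (f (g1 θ) - f (g2 θ)) := by
    apply intervalIntegral.integral_mono_on hm0
      ((hInt g4 hm4 0 m).sub (hInt g3 hm3 0 m))
      ((hInt g1 hm1 0 m).sub (hInt g2 hm2 0 m))
    exact key
  calc (∫ θ in (0:ℝ)..δ, (f (g1 θ) - f (g2 θ)))
      = ∫ θ in (0:ℝ)..m, (f (g1 θ) - f (g2 θ)) := by rw [hsplit, hzero, add_zero]
    _ ≥ ∫ θ in (0:ℝ)..m, (f (g4 θ) - f (g3 θ)) := hmono
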